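/- Let Q be a probability measure on ℝ supported in [a, b]. With ṽ_g(φ) = ṽ(φ)·φ ∫ r²/(1 + v(φ)·r)² dP(r) and ṽ(φ) = (1/v(φ)² − φ ∫ r²/(1 + v(φ)·r)² dP(r))⁻¹, define Υ(φ) = (1 + ṽ_g(φ)) · ∫ 1/(1 + v(φ)·r)² dQ(r) for φ ∈ (1, ∞). Then Υ is continuous and finite on (1, ∞), and Υ(φ) → 1 as φ → ∞. -/

import Mathlib

open Filter MeasureTheory Set

namespace BiasAux

variable {a b : ℝ}

lemma denom_pos {c r : ℝ} (hc : 0 ≤ c) (hr : 0 ≤ r) : (0:ℝ) < 1 + c * r := by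
  nlinarith [mul_nonneg hc hr]

lemma integrable_bdd {μ : Measure ℝ} [IsProbabilityMeasure μ] {f : ℝ → ℝ}
    (hf : AEStronglyMeasurable f μ) {C : ℝ} (h : ∀ᵐ r ∂μ, ‖f r‖ ≤ C) :
    Integrable f μ := (integrable_const C).mono' hf h

lemma integral_le_of_ae {μ : Measure ℝ} [IsProbabilityMeasure μ] {f : ℝ → ℝ}
    (hint : Integrable f μ) {C : ℝ} (h : ∀ᵐ r ∂μ, f r ≤ C) : ∫ r, f r ∂μ ≤ C := by
  have := integral_mono_ae hint (integrable_const C) h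
  simpa using this

lemma le_integral_of_ae {μ : Measure ℝ} [IsProbabilityMeasure μ] {f : ℝ → ℝ}
    (hint : Integrable f μ) {C : ℝ} (h : ∀ᵐ r ∂μ, C ≤ f r) : C ≤ ∫ r, f r ∂μ := by
  have := integral_mono_ae (integrable_const C) hint h
  simpa using this

section supp
variable (ha : 0 < a) (hab : a ≤ b) {μ : Measure ℝ} [IsProbabilityMeasure μ]
  (hsupp : ∀ᵐ r ∂μ, r ∈ Icc a b)

include ha hab hsupp

lemma integrable_f1 {c : ℝ} (hc : 0 ≤ c) :
    Integrable (fun r => c * r / (1 + c * r)) μ := by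
  refine integrable_bdd ((measurable_const.mul measurable_id).div
    (measurable_const.add (measurable_const.mul measurable_id))).aestronglyMeasurable
    (C := 1) ?_
  filter_upwards [hsupp] with r hr
  have hr0 : 0 ≤ r := le_trans ha.le hr.1
  have hd : (0:ℝ) < 1 + c * r := denom_pos hc hr0
  rw [Real.norm_eq_abs, abs_le]
  constructor
  · nlinarith [div_nonneg (mul_nonneg hc hr0) hd.le]
  · rw [div_le_one hd]; nlinarith

lemma integrable_f2 {c : ℝ} (hc : 0 ≤ c) :
    Integrable (fun r => r ^ 2 / (1 + c * r) ^ 2) μ := by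
  refine integrable_bdd ((measurable_id.pow_const 2).div
    ((measurable_const.add (measurable_const.mul measurable_id)).pow_const 2)).aestronglyMeasurable
    (C := b ^ 2) ?_
  filter_upwards [hsupp] with r hr
  have hr0 : 0 ≤ r := le_trans ha.le hr.1
  have hd : (0:ℝ) < 1 + c * r := denom_pos hc hr0
  have h1 : (1:ℝ) ≤ (1 + c * r) ^ 2 := by nlinarith [mul_nonneg hc hr0]
  have : r ^ 2 / (1 + c * r) ^ 2 ≤ r ^ 2 := div_le_self (sq_nonneg r) h1
  rw [Real.norm_eq_abs, abs_of_nonneg (div_nonneg (sq_nonneg r) (by positivity))]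
  nlinarith [hr.2]

lemma integrable_f3 {c : ℝ} (hc : 0 ≤ c) :
    Integrable (fun r => 1 / (1 + c * r) ^ 2) μ := by
  refine integrable_bdd (measurable_const.div
    ((measurable_const.add (measurable_const.mul measurable_id)).pow_const 2)).aestronglyMeasurable
    (C := 1) ?_
  filter_upwards [hsupp] with r hr
  have hr0 : 0 ≤ r := le_trans ha.le hr.1
  have hd : (0:ℝ) < 1 + c * r := denom_pos hc hr0
  have h1 : (1:ℝ) ≤ (1 + c * r) ^ 2 := by nlinarith [mul_nonneg hc hr0]
  rw [Real.norm_eq_abs, abs_of_nonneg (by positivity)]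
  exact div_le_one_of_le₀ h1 (by positivity)


lemma g_strictMono {x y : ℝ} (hx : 0 < x) (hxy : x < y) :
    ∫ r, x * r / (1 + x * r) ∂μ < ∫ r, y * r / (1 + y * r) ∂μ := by
  set δ := (y - x) * a / ((1 + x * b) * (1 + y * b)) with hδdef
  have hb : 0 < b := lt_of_lt_of_le ha hab
  have hy : 0 < y := hx.trans hxy
  have hδ : 0 < δ := by
    apply div_pos (by nlinarith) (by nlinarith [mul_nonneg hx.le hb.le, mul_nonneg hy.le hb.le])
  have hae : ∀ᵐ r ∂μ, x * r / (1 + x * r) + δ ≤ y * r / (1 + y * r) := by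
    filter_upwards [hsupp] with r hr
    have hr0 : 0 < r := lt_of_lt_of_le ha hr.1
    have hd1 : (0:ℝ) < 1 + x * r := denom_pos hx.le hr0.le
    have hd2 : (0:ℝ) < 1 + y * r := denom_pos hy.le hr0.le
    have heq : y * r / (1 + y * r) - x * r / (1 + x * r)
        = (y - x) * r / ((1 + x * r) * (1 + y * r)) := by
      field_simp; ring
    have hle : δ ≤ (y - x) * r / ((1 + x * r) * (1 + y * r)) := by
      apply div_le_div₀ (by nlinarith) (mul_le_mul_of_nonneg_left hr.1 (by linarith)) (by positivity)
      have h1 : 1 + x * r ≤ 1 + x * b := by nlinarith [hr.2]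
      have h2 : 1 + y * r ≤ 1 + y * b := by nlinarith [hr.2]
      nlinarith
    linarith [heq ▸ hle]
  have hi1 := integrable_f1 ha hab hsupp hx.le
  have hi2 := integrable_f1 ha hab hsupp hy.le
  have := integral_mono_ae (hi1.add (integrable_const δ)) hi2 hae
  simp only [Pi.add_apply] at this
  rw [integral_add hi1 (integrable_const δ)] at this
  simp only [integral_const, measure_univ, probReal_univ, ENNReal.toReal_one, smul_eq_mul, one_mul] at this
  linarith

lemma g_mono {x y : ℝ} (hx : 0 < x) (hxy : x ≤ y) :
    ∫ r, x * r / (1 + x * r) ∂μ ≤ ∫ r, y * r / (1 + y * r) ∂μ := by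
  rcases eq_or_lt_of_le hxy with h | h
  · subst h; exact le_rfl
  · exact (g_strictMono ha hab hsupp hx h).le

-- key inequality: c^2 * ∫ f2 < ∫ f1
lemma key_lt {c : ℝ} (hc : 0 < c) :
    c ^ 2 * ∫ r, r ^ 2 / (1 + c * r) ^ 2 ∂μ < ∫ r, c * r / (1 + c * r) ∂μ := by
  have hb : 0 < b := lt_of_lt_of_le ha hab
  set δ := c * a / (1 + c * b) ^ 2 with hδdef
  have hδ : 0 < δ := by positivity
  have hae : ∀ᵐ r ∂μ, c ^ 2 * (r ^ 2 / (1 + c * r) ^ 2) + δ ≤ c * r / (1 + c * r) := by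
    filter_upwards [hsupp] with r hr
    have hr0 : 0 < r := lt_of_lt_of_le ha hr.1
    have hd : (0:ℝ) < 1 + c * r := denom_pos hc.le hr0.le
    have heq : c * r / (1 + c * r) - c ^ 2 * (r ^ 2 / (1 + c * r) ^ 2)
        = c * r / (1 + c * r) ^ 2 := by
      field_simp; ring
    have hle : δ ≤ c * r / (1 + c * r) ^ 2 := by
      apply div_le_div₀ (by nlinarith) (mul_le_mul_of_nonneg_left hr.1 hc.le) (by positivity)
      have h1 : 1 + c * r ≤ 1 + c * b := by nlinarith [hr.2]
      nlinarith
    linarith [heq ▸ hle]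
  have hi2 := (integrable_f2 ha hab hsupp hc.le).const_mul (c ^ 2)
  have hi1 := integrable_f1 ha hab hsupp hc.le
  have := integral_mono_ae (hi2.add (integrable_const δ)) hi1 hae
  simp only [Pi.add_apply] at this
  rw [integral_add hi2 (integrable_const δ), integral_const_mul] at this
  simp only [integral_const, measure_univ, probReal_univ, ENNReal.toReal_one, smul_eq_mul, one_mul] at this
  linarith

-- bounds on integrals
lemma g_lower {c : ℝ} (hc : 0 ≤ c) :
    c * a / (1 + c * b) ≤ ∫ r, c * r / (1 + c * r) ∂μ := by
  apply le_integral_of_ae (integrable_f1 ha hab hsupp hc)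
  filter_upwards [hsupp] with r hr
  have hr0 : 0 ≤ r := le_trans ha.le hr.1
  have hd : (0:ℝ) < 1 + c * r := denom_pos hc hr0
  apply div_le_div₀ (by nlinarith) (by nlinarith [hr.1]) hd (by nlinarith [hr.2])

lemma I_nonneg {c : ℝ} : 0 ≤ ∫ r, r ^ 2 / (1 + c * r) ^ 2 ∂μ :=
  integral_nonneg fun r => by positivity

lemma I_upper {c : ℝ} (hc : 0 ≤ c) : ∫ r, r ^ 2 / (1 + c * r) ^ 2 ∂μ ≤ b ^ 2 := by
  apply integral_le_of_ae (integrable_f2 ha hab hsupp hc)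
  filter_upwards [hsupp] with r hr
  have hr0 : 0 ≤ r := le_trans ha.le hr.1
  have hd : (0:ℝ) < 1 + c * r := denom_pos hc hr0
  have h1 : (1:ℝ) ≤ (1 + c * r) ^ 2 := by nlinarith [mul_nonneg hc hr0]
  calc r ^ 2 / (1 + c * r) ^ 2 ≤ r ^ 2 := div_le_self (sq_nonneg r) h1
    _ ≤ b ^ 2 := by nlinarith [hr.2]

lemma J_upper {c : ℝ} (hc : 0 ≤ c) : ∫ r, 1 / (1 + c * r) ^ 2 ∂μ ≤ 1 := by
  apply integral_le_of_ae (integrable_f3 ha hab hsupp hc)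
  filter_upwards [hsupp] with r hr
  have hr0 : 0 ≤ r := le_trans ha.le hr.1
  have h1 : (1:ℝ) ≤ (1 + c * r) ^ 2 := by nlinarith [mul_nonneg hc hr0]
  exact div_le_one_of_le₀ h1 (by positivity)

lemma J_lower {c : ℝ} (hc : 0 ≤ c) :
    1 / (1 + c * b) ^ 2 ≤ ∫ r, 1 / (1 + c * r) ^ 2 ∂μ := by
  apply le_integral_of_ae (integrable_f3 ha hab hsupp hc)
  filter_upwards [hsupp] with r hr
  have hr0 : 0 ≤ r := le_trans ha.le hr.1
  have hd : (0:ℝ) < 1 + c * r := denom_pos hc hr0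
  apply div_le_div₀ zero_le_one le_rfl (by positivity)
  have : 1 + c * r ≤ 1 + c * b := by nlinarith [hr.2]
  nlinarith

-- continuity of parameterized integrals on (0, ∞)
lemma contI {c₀ : ℝ} (hc₀ : 0 < c₀) :
    ContinuousAt (fun c => ∫ r, r ^ 2 / (1 + c * r) ^ 2 ∂μ) c₀ := by
  apply continuousAt_of_dominated (bound := fun _ => b ^ 2)
  · exact Eventually.of_forall fun c =>
      ((measurable_id.pow_const 2).div
        ((measurable_const.add (measurable_const.mul measurable_id)).pow_const 2)).aestronglyMeasurable
  · filter_upwards [Ioi_mem_nhds hc₀] with c hc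
    filter_upwards [hsupp] with r hr
    have hr0 : 0 ≤ r := le_trans ha.le hr.1
    have h1 : (1:ℝ) ≤ (1 + c * r) ^ 2 := by
      nlinarith [mul_nonneg (le_of_lt hc) hr0]
    rw [Real.norm_eq_abs, abs_of_nonneg (div_nonneg (sq_nonneg r) (by positivity))]
    calc r ^ 2 / (1 + c * r) ^ 2 ≤ r ^ 2 := div_le_self (sq_nonneg r) h1
      _ ≤ b ^ 2 := by nlinarith [hr.2]
  · exact integrable_const _
  · filter_upwards [hsupp] with r hr
    have hr0 : 0 ≤ r := le_trans ha.le hr.1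
    have hd : (0:ℝ) < 1 + c₀ * r := denom_pos hc₀.le hr0
    exact ContinuousAt.div continuousAt_const
      (((continuousAt_const.add (continuousAt_id.mul continuousAt_const))).pow 2)
      (by positivity)

lemma contJ {c₀ : ℝ} (hc₀ : 0 < c₀) :
    ContinuousAt (fun c => ∫ r, 1 / (1 + c * r) ^ 2 ∂μ) c₀ := by
  apply continuousAt_of_dominated (bound := fun _ => (1:ℝ))
  · exact Eventually.of_forall fun c =>
      (measurable_const.div
        ((measurable_const.add (measurable_const.mul measurable_id)).pow_const 2)).aestronglyMeasurable
  · filter_upwards [Ioi_mem_nhds hc₀] with c hc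
    filter_upwards [hsupp] with r hr
    have hr0 : 0 ≤ r := le_trans ha.le hr.1
    have h1 : (1:ℝ) ≤ (1 + c * r) ^ 2 := by
      nlinarith [mul_nonneg (le_of_lt hc) hr0]
    rw [Real.norm_eq_abs, abs_of_nonneg (by positivity)]
    exact div_le_one_of_le₀ h1 (by positivity)
  · exact integrable_const _
  · filter_upwards [hsupp] with r hr
    have hr0 : 0 ≤ r := le_trans ha.le hr.1
    have hd : (0:ℝ) < 1 + c₀ * r := denom_pos hc₀.le hr0
    exact ContinuousAt.div continuousAt_const
      (((continuousAt_const.add (continuousAt_id.mul continuousAt_const))).pow 2)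
      (by positivity)

end supp

end BiasAux



open Filter MeasureTheory

/-- **Properties of the bias multiplier `Υ` of the one-step predictor.**
Let `0 < a ≤ b`, let `P` and `Q` be probability measures supported in `[a, b]`, and let
`v : (1, ∞) → ℝ` with `v φ > 0` be the unique solution of
`1/φ = ∫ v(φ)·r/(1 + v(φ)·r) dP(r)`. With
`ṽ(φ) = (1/v(φ)² − φ ∫ r²/(1 + v(φ)·r)² dP(r))⁻¹`,
`ṽ_g(φ) = ṽ(φ)·φ ∫ r²/(1 + v(φ)·r)² dP(r)`, and
`Υ(φ) = (1 + ṽ_g(φ)) ∫ 1/(1 + v(φ)·r)² dQ(r)`, the function `Υ` is continuous (and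
finite, being real-valued) on `(1, ∞)` and `Υ(φ) → 1` as `φ → ∞`. -/
theorem bias_multiplier_properties (a b : ℝ) (ha : 0 < a) (hab : a ≤ b)
    (P : Measure ℝ) [IsProbabilityMeasure P] (hPsupp : ∀ᵐ r ∂P, r ∈ Set.Icc a b)
    (Q : Measure ℝ) [IsProbabilityMeasure Q] (hQsupp : ∀ᵐ r ∂Q, r ∈ Set.Icc a b)
    (v : ℝ → ℝ)
    (hv : ∀ φ ∈ Set.Ioi (1 : ℝ),
      0 < v φ ∧ 1 / φ = ∫ r, v φ * r / (1 + v φ * r) ∂P)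
    (tv tvg Υ : ℝ → ℝ)
    (htv : ∀ φ ∈ Set.Ioi (1 : ℝ),
      tv φ = (1 / (v φ) ^ 2 - φ * ∫ r, r ^ 2 / (1 + v φ * r) ^ 2 ∂P)⁻¹)
    (htvg : ∀ φ ∈ Set.Ioi (1 : ℝ),
      tvg φ = tv φ * (φ * ∫ r, r ^ 2 / (1 + v φ * r) ^ 2 ∂P))
    (hΥ : ∀ φ ∈ Set.Ioi (1 : ℝ),
      Υ φ = (1 + tvg φ) * ∫ r, 1 / (1 + v φ * r) ^ 2 ∂Q) :
    ContinuousOn Υ (Set.Ioi 1) ∧ Tendsto Υ atTop (nhds 1) := by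
  have hb : 0 < b := lt_of_lt_of_le ha hab
  set g : ℝ → ℝ := fun c => ∫ r, c * r / (1 + c * r) ∂P with hgdef
  set Ip : ℝ → ℝ := fun c => ∫ r, r ^ 2 / (1 + c * r) ^ 2 ∂P with hIpdef
  set Jq : ℝ → ℝ := fun c => ∫ r, 1 / (1 + c * r) ^ 2 ∂Q with hJqdef
  have hvpos : ∀ φ ∈ Set.Ioi (1 : ℝ), 0 < v φ := fun φ hφ => (hv φ hφ).1
  have hvfix : ∀ φ ∈ Set.Ioi (1 : ℝ), g (v φ) = 1 / φ := fun φ hφ => ((hv φ hφ).2).symm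
  -- key positivity of the denominator
  have hkey : ∀ φ ∈ Set.Ioi (1 : ℝ), φ * (v φ) ^ 2 * Ip (v φ) < 1 := by
    intro φ hφ
    have hφ1 : (1 : ℝ) < φ := hφ
    have hφ0 : (0 : ℝ) < φ := by linarith
    have hc := hvpos φ hφ
    have h : (v φ) ^ 2 * Ip (v φ) < g (v φ) := BiasAux.key_lt ha hab hPsupp hc
    rw [hvfix φ hφ] at h
    have h2 := mul_lt_mul_of_pos_left h hφ0
    rw [mul_one_div, div_self hφ0.ne'] at h2
    linarith [h2]
  have hD : ∀ φ ∈ Set.Ioi (1 : ℝ), 0 < 1 - φ * (v φ) ^ 2 * Ip (v φ) :=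
    fun φ hφ => by linarith [hkey φ hφ]
  -- the simplified formula for Υ
  have hΥeq : ∀ φ ∈ Set.Ioi (1 : ℝ),
      Υ φ = Jq (v φ) / (1 - φ * (v φ) ^ 2 * Ip (v φ)) := by
    intro φ hφ
    have hc := hvpos φ hφ
    have hDφ := hD φ hφ
    rw [hΥ φ hφ, htvg φ hφ, htv φ hφ]
    have hIi : (∫ r, r ^ 2 / (1 + v φ * r) ^ 2 ∂P) = Ip (v φ) := rfl
    have hJi : (∫ r, 1 / (1 + v φ * r) ^ 2 ∂Q) = Jq (v φ) := rfl
    rw [hIi, hJi]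
    have hda : 1 / (v φ) ^ 2 - φ * Ip (v φ)
        = (1 - φ * (v φ) ^ 2 * Ip (v φ)) / (v φ) ^ 2 := by
      field_simp
    rw [hda, inv_div]
    have hne : (1 - φ * (v φ) ^ 2 * Ip (v φ)) ≠ 0 := hDφ.ne'
    rw [div_mul_eq_mul_div, one_add_div hne]
    ring
  -- continuity of v on (1, ∞)
  have hvc : ContinuousOn v (Set.Ioi 1) := by
    intro φ₀ hφ₀
    have hφ₀1 : (1 : ℝ) < φ₀ := hφ₀
    have hφ₀0 : (0 : ℝ) < φ₀ := by linarith
    have hv₀ := hvpos φ₀ hφ₀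
    have hinv : Tendsto (fun φ : ℝ => 1 / φ) (nhdsWithin φ₀ (Set.Ioi 1)) (nhds (1 / φ₀)) :=
      ((continuousAt_const.div continuousAt_id hφ₀0.ne').tendsto).mono_left nhdsWithin_le_nhds
    rw [ContinuousWithinAt]
    apply tendsto_order.2
    constructor
    · intro l hl
      rcases le_or_gt l 0 with h0 | h0
      · filter_upwards [self_mem_nhdsWithin] with φ hφ
        exact lt_of_le_of_lt h0 (hvpos φ hφ)
      · have hgl : g l < 1 / φ₀ := by
          rw [← hvfix φ₀ hφ₀]; exact BiasAux.g_strictMono ha hab hPsupp h0 hl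
        filter_upwards [hinv.eventually (eventually_gt_nhds hgl), self_mem_nhdsWithin]
          with φ h1 hφ
        by_contra hcon
        push_neg at hcon
        have h2 : g (v φ) ≤ g l := BiasAux.g_mono ha hab hPsupp (hvpos φ hφ) hcon
        rw [hvfix φ hφ] at h2
        linarith
    · intro u hu
      have hgu : 1 / φ₀ < g u := by
        rw [← hvfix φ₀ hφ₀]; exact BiasAux.g_strictMono ha hab hPsupp hv₀ hu
      filter_upwards [hinv.eventually (eventually_lt_nhds hgu), self_mem_nhdsWithin]
        with φ h1 hφ
      by_contra hcon
      push_neg at hcon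
      have h2 : g u ≤ g (v φ) := BiasAux.g_mono ha hab hPsupp (by linarith : 0 < u) hcon
      rw [hvfix φ hφ] at h2
      linarith
  -- continuity of Υ
  have hIpc : ContinuousOn Ip (Set.Ioi 0) :=
    fun c hc => (BiasAux.contI ha hab hPsupp hc).continuousWithinAt
  have hJqc : ContinuousOn Jq (Set.Ioi 0) :=
    fun c hc => (BiasAux.contJ ha hab hQsupp hc).continuousWithinAt
  have hmaps : Set.MapsTo v (Set.Ioi 1) (Set.Ioi 0) := fun φ hφ => hvpos φ hφ
  have hcont : ContinuousOn Υ (Set.Ioi 1) := by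
    apply ContinuousOn.congr
      (f := fun φ => Jq (v φ) / (1 - φ * (v φ) ^ 2 * Ip (v φ)))
    · apply ContinuousOn.div
      · exact hJqc.comp hvc hmaps
      · exact continuousOn_const.sub
          ((continuousOn_id.mul (hvc.pow 2)).mul (hIpc.comp hvc hmaps))
      · exact fun φ hφ => (hD φ hφ).ne'
    · exact fun φ hφ => hΥeq φ hφ
  refine ⟨hcont, ?_⟩
  -- the limit as φ → ∞
  have hvb : ∀ᶠ φ in atTop, v φ ≤ 2 / (a * φ) := by
    filter_upwards [eventually_gt_atTop (1 : ℝ), eventually_ge_atTop (2 * b / a)]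
      with φ hφ hba
    have hφ0 : (0 : ℝ) < φ := lt_trans one_pos hφ
    have hc := hvpos φ hφ
    have hlow : v φ * a / (1 + v φ * b) ≤ 1 / φ := by
      rw [← hvfix φ hφ]; exact BiasAux.g_lower ha hab hPsupp hc.le
    have hd : (0 : ℝ) < 1 + v φ * b := by positivity
    rw [div_le_div_iff₀ hd hφ0] at hlow
    have hba' : 2 * b ≤ φ * a := (div_le_iff₀ ha).mp hba
    rw [le_div_iff₀ (by positivity : (0:ℝ) < a * φ)]
    nlinarith [mul_le_mul_of_nonneg_left hba' hc.le]
  have hv0 : Tendsto v atTop (nhds 0) := by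
    apply tendsto_of_tendsto_of_tendsto_of_le_of_le'
      (tendsto_const_nhds (x := (0:ℝ)))
      (tendsto_const_nhds.div_atTop (tendsto_id.const_mul_atTop ha))
    · filter_upwards [eventually_gt_atTop (1 : ℝ)] with φ hφ
      exact (hvpos φ hφ).le
    · exact hvb
  have hφv : ∀ᶠ φ in atTop, φ * v φ ≤ 2 / a := by
    filter_upwards [hvb, eventually_gt_atTop (0 : ℝ)] with φ h1 h2
    rw [le_div_iff₀ ha]
    rw [le_div_iff₀ (by positivity : (0:ℝ) < a * φ)] at h1
    nlinarith
  have hE0 : Tendsto (fun φ => φ * (v φ) ^ 2 * Ip (v φ)) atTop (nhds 0) := by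
    apply tendsto_of_tendsto_of_tendsto_of_le_of_le'
      (tendsto_const_nhds (x := (0:ℝ)))
      (h := fun φ => 2 / a * b ^ 2 * v φ)
    · have : Tendsto (fun φ => 2 / a * b ^ 2 * v φ) atTop (nhds (2 / a * b ^ 2 * 0)) :=
        hv0.const_mul _
      simpa using this
    · filter_upwards [eventually_gt_atTop (1 : ℝ)] with φ hφ
      have hc := hvpos φ hφ
      have hφ0 : (0 : ℝ) < φ := lt_trans one_pos hφ
      exact mul_nonneg (mul_nonneg hφ0.le (sq_nonneg _)) (BiasAux.I_nonneg ha hab hPsupp (c := v φ))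
    · filter_upwards [hφv, eventually_gt_atTop (1 : ℝ)] with φ h1 hφ
      have hc := hvpos φ hφ
      have hφ0 : (0 : ℝ) < φ := lt_trans one_pos hφ
      have hIu : Ip (v φ) ≤ b ^ 2 := BiasAux.I_upper ha hab hPsupp hc.le
      have hIl : 0 ≤ Ip (v φ) := BiasAux.I_nonneg ha hab hPsupp (c := v φ)
      nlinarith [mul_le_mul_of_nonneg_right h1 (mul_nonneg hc.le hIl),
        mul_le_mul_of_nonneg_left (mul_le_mul_of_nonneg_left hIu hc.le)
          (by positivity : (0:ℝ) ≤ 2 / a)]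
  have hDt : Tendsto (fun φ => 1 - φ * (v φ) ^ 2 * Ip (v φ)) atTop (nhds 1) := by
    have := (tendsto_const_nhds (x := (1:ℝ))).sub hE0
    simpa using this
  have hJt : Tendsto (fun φ => Jq (v φ)) atTop (nhds 1) := by
    have hcont0 : ContinuousAt (fun t : ℝ => 1 / (1 + t * b) ^ 2) 0 := by
      apply ContinuousAt.div continuousAt_const (by fun_prop)
      norm_num
    have hlt : Tendsto (fun φ => 1 / (1 + v φ * b) ^ 2) atTop
        (nhds (1 / (1 + 0 * b) ^ 2)) := hcont0.tendsto.comp hv0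
    norm_num at hlt
    apply tendsto_of_tendsto_of_tendsto_of_le_of_le' hlt tendsto_const_nhds
    · filter_upwards [eventually_gt_atTop (1 : ℝ)] with φ hφ
      rw [← one_div]
      exact BiasAux.J_lower ha hab hQsupp (hvpos φ hφ).le
    · filter_upwards [eventually_gt_atTop (1 : ℝ)] with φ hφ
      exact BiasAux.J_upper ha hab hQsupp (hvpos φ hφ).le
  have hlim : Tendsto (fun φ => Jq (v φ) / (1 - φ * (v φ) ^ 2 * Ip (v φ))) atTop
      (nhds (1 / 1)) := hJt.div hDt one_ne_zero
  have heq : (fun φ => Jq (v φ) / (1 - φ * (v φ) ^ 2 * Ip (v φ))) =ᶠ[atTop] Υ := by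
    filter_upwards [eventually_gt_atTop (1 : ℝ)] with φ hφ
    exact (hΥeq φ hφ).symm
  simpa using hlim.congr' heq
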